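/- If 0 < φ < 1 satisfies φ + φ^{1/2} < 1, then for every integer j ≥ 1, (1 + φ^{j/2}/(j+1)) / (1 + φ^{j/2} + φ^j/(1-φ^{1/2})) ≥ 1 - φ^{1/2}/2 - φ/2, and the right-hand side exceeds 1/2. -/

import Mathlib

/-- The inequality used in the proof of Lemma 4.7: if `0 < φ < 1` and `φ + φ^{1/2} < 1`, then for
every integer `j ≥ 1`,
`(1 + φ^{j/2}/(j+1)) / (1 + φ^{j/2} + φ^j/(1-φ^{1/2})) ≥ 1 - φ^{1/2}/2 - φ/2 > 1/2`. -/
theorem vote_ratio_bound (φ : ℝ) (hφ0 : 0 < φ) (hφ1 : φ < 1)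
    (hcond : φ + Real.sqrt φ < 1) (j : ℕ) (hj : 1 ≤ j) :
    (1 + Real.sqrt φ ^ j / (j + 1)) /
        (1 + Real.sqrt φ ^ j + φ ^ j / (1 - Real.sqrt φ)) ≥
      1 - Real.sqrt φ / 2 - φ / 2 ∧
    (1 : ℝ) / 2 < 1 - Real.sqrt φ / 2 - φ / 2 := by
  set s := Real.sqrt φ with hs_def
  have hs0 : 0 < s := Real.sqrt_pos.2 hφ0
  have hs1 : s < 1 := by
    rw [hs_def]
    rw [show (1:ℝ) = Real.sqrt 1 from Real.sqrt_one.symm]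
    exact Real.sqrt_lt_sqrt hφ0.le hφ1
  have hφs : φ = s ^ 2 := (Real.sq_sqrt hφ0.le).symm
  have hc : s ^ 2 + s < 1 := by rw [← hφs]; exact hcond
  have h1s : (0:ℝ) < 1 - s := by linarith
  constructor
  · have hu0 : 0 < s ^ j := pow_pos hs0 j
    have hus : s ^ j ≤ s := by
      calc s ^ j ≤ s ^ 1 := pow_le_pow_of_le_one hs0.le hs1.le hj
        _ = s := pow_one s
    have hφj : φ ^ j = (s ^ j) ^ 2 := by rw [hφs]; ring
    have hD : 0 < 1 + s ^ j + φ ^ j / (1 - s) := by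
      have : 0 ≤ φ ^ j / (1 - s) := div_nonneg (pow_nonneg hφ0.le j) h1s.le
      linarith
    rw [ge_iff_le, le_div_iff₀ hD, hφs]
    rcases eq_or_lt_of_le hj with h1 | h2
    · obtain rfl := h1.symm
      push_cast
      simp only [pow_one]
      rw [show 1 + s + s ^ 2 / (1 - s) = ((1 - s) * (1 + s) + s ^ 2) / (1 - s) by
        field_simp, ← mul_div_assoc, div_le_iff₀ h1s]
      nlinarith [sq_nonneg s]
    · have h2j : 2 ≤ j := h2
      have hu2 : s ^ j ≤ s ^ 2 := pow_le_pow_of_le_one hs0.le hs1.le h2j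
      have hnn : 0 ≤ s ^ j / ((j:ℝ) + 1) := by positivity
      have key : (1 - s / 2 - s ^ 2 / 2) * (1 + s ^ j + (s ^ 2) ^ j / (1 - s)) ≤ 1 := by
        rw [show ((s^2)^j : ℝ) = (s ^ j) ^ 2 by ring]
        set u := s ^ j with hu_def
        have hexp : 1 + u + u ^ 2 / (1 - s) = ((1 - s) * (1 + u) + u ^ 2) / (1 - s) := by
          field_simp
        rw [hexp, ← mul_div_assoc, div_le_one h1s]
        nlinarith [mul_nonneg (mul_nonneg hs0.le hs0.le) (sub_nonneg.2 hc.le),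
          mul_nonneg hs0.le (sub_nonneg.2 hc.le),
          mul_nonneg (sub_nonneg.2 hu2) h1s.le,
          mul_nonneg (sub_nonneg.2 hu2) (by positivity : (0:ℝ) ≤ s^2 + u),
          sq_nonneg (s^2 - u), sq_nonneg s, sq_nonneg (1 - s), hu0.le,
          mul_nonneg (mul_nonneg hs0.le hs0.le) hs0.le]
      linarith
  · linarith
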